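/- Under the mixed Moore Cayley hypotheses, no two distinct elements of S commute apart from the inverse pairs in S₁: for all s, t ∈ S with s ≠ t, if s * t = t * s then s ∈ S₁ and t = s⁻¹. -/

import Mathlib

open scoped Pointwise

/-- Under the mixed Moore Cayley hypotheses, no two distinct elements of `S = S₁ ∪ S₂` commute, apart from the inverse pairs in `S₁`. -/
theorem mixed_moore_cayley_no_commuting {G : Type*} [Group G] [Fintype G] [DecidableEq G]
    (r z : ℕ) (hr : 0 < r) (hz : 0 < z)
    (S₁ S₂ : Finset G)
    (hcard : Fintype.card G = (z + r) ^ 2 + z + 1)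
    (hone : (1 : G) ∉ S₁ ∪ S₂)
    (hdisj : Disjoint S₁ S₂)
    (hS₁inv : S₁⁻¹ = S₁) (hS₁card : S₁.card = r)
    (hS₂inv : S₂ ∩ S₂⁻¹ = ∅) (hS₂card : S₂.card = z)
    (hdiam : ∀ g : G, g ≠ 1 →
      g ∈ S₁ ∪ S₂ ∨ ∃ s ∈ S₁ ∪ S₂, ∃ t ∈ S₁ ∪ S₂, g = s * t) :
    ∀ s ∈ S₁ ∪ S₂, ∀ t ∈ S₁ ∪ S₂, s ≠ t → s * t = t * s → s ∈ S₁ ∧ t = s⁻¹ := by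
  classical
  set S : Finset G := S₁ ∪ S₂ with hSdef
  -- key: if a ∈ S and a⁻¹ ∈ S then a ∈ S₁
  have key : ∀ a ∈ S, a⁻¹ ∈ S → a ∈ S₁ := by
    intro a ha hai
    rcases Finset.mem_union.1 ha with h | h
    · exact h
    · exfalso
      rcases Finset.mem_union.1 hai with h' | h'
      · have : a ∈ S₁ := by
          rw [← hS₁inv]
          simpa using Finset.inv_mem_inv h'
        exact (Finset.disjoint_left.1 hdisj this h)
      · have : a⁻¹ ∈ S₂ ∩ S₂⁻¹ := by
          refine Finset.mem_inter.2 ⟨h', ?_⟩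
          simpa using Finset.inv_mem_inv h
        rw [hS₂inv] at this
        exact absurd this (Finset.notMem_empty _)
  have keyinv : ∀ a ∈ S₁, a⁻¹ ∈ S₁ := by
    intro a ha
    rw [← hS₁inv]
    simpa using Finset.inv_mem_inv ha
  intro s hs t ht hst hcomm
  by_cases h1 : s * t = 1
  · have htinv : t = s⁻¹ := eq_inv_of_mul_eq_one_right h1
    subst htinv
    exact ⟨key s hs ht, rfl⟩
  · exfalso
    set f : G × G → G := fun p => p.1 * p.2 with hf
    set Q : Finset (G × G) := (S ×ˢ S).filter (fun p => ¬ p.1 * p.2 = 1) with hQ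
    have hk : S.card = r + z := by
      rw [hSdef, Finset.card_union_of_disjoint hdisj, hS₁card, hS₂card]
    -- the fiber over 1
    have hF : (S ×ˢ S).filter (fun p => p.1 * p.2 = 1)
        = S₁.image (fun a => (a, a⁻¹)) := by
      ext ⟨a, b⟩
      simp only [Finset.mem_filter, Finset.mem_product, Finset.mem_image, Prod.mk.injEq]
      constructor
      · rintro ⟨⟨ha, hb⟩, hab⟩
        have hb' : b = a⁻¹ := eq_inv_of_mul_eq_one_right hab
        subst hb'
        exact ⟨a, key a ha hb, rfl, rfl⟩
      · rintro ⟨a', ha', rfl, rfl⟩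
        refine ⟨⟨Finset.mem_union.2 (Or.inl ha'),
          Finset.mem_union.2 (Or.inl (keyinv a' ha'))⟩, mul_inv_cancel a'⟩
    have hFcard : ((S ×ˢ S).filter (fun p => p.1 * p.2 = 1)).card = r := by
      rw [hF, Finset.card_image_of_injective _
        (fun a b h => (Prod.mk.injEq _ _ _ _ ▸ h : a = b ∧ _).1), hS₁card]
    have hQcard : Q.card + r = (r + z) * (r + z) := by
      have h := Finset.card_filter_add_card_filter_not
        (s := S ×ˢ S) (p := fun p => p.1 * p.2 = 1)
      rw [hFcard, Finset.card_product, hk] at h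
      rw [hQ]
      omega
    -- (s,t) and (t,s) are distinct members of Q with the same product
    have hQst : (s, t) ∈ Q :=
      Finset.mem_filter.2 ⟨Finset.mem_product.2 ⟨hs, ht⟩, h1⟩
    have hQts : (t, s) ∈ Q :=
      Finset.mem_filter.2 ⟨Finset.mem_product.2 ⟨ht, hs⟩, by
        simpa [← hcomm] using h1⟩
    have hne : ((t, s) : G × G) ≠ (s, t) := by
      simp only [ne_eq, Prod.mk.injEq, not_and]
      intro h; exact absurd h.symm hst
    -- the image of Q under f loses at least one element
    have himg : Q.image f ⊆ (Q.erase (s, t)).image f := by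
      intro x hx
      obtain ⟨p, hp, rfl⟩ := Finset.mem_image.1 hx
      by_cases hps : p = (s, t)
      · exact Finset.mem_image.2 ⟨(t, s), Finset.mem_erase.2 ⟨hne, hQts⟩, by
          simp [hf, hps, hcomm]⟩
      · exact Finset.mem_image.2 ⟨p, Finset.mem_erase.2 ⟨hps, hp⟩, rfl⟩
    have himgcard : (Q.image f).card + 1 ≤ Q.card := by
      calc (Q.image f).card + 1 ≤ ((Q.erase (s, t)).image f).card + 1 :=
            add_le_add_left (Finset.card_le_card himg) 1
        _ ≤ (Q.erase (s, t)).card + 1 := add_le_add_left (Finset.card_image_le) 1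
        _ = Q.card := Finset.card_erase_add_one hQst
    -- covering G
    have hcover : (Finset.univ : Finset G) ⊆ insert 1 (S ∪ Q.image f) := by
      intro g _
      by_cases hg1 : g = 1
      · simp [hg1]
      · rcases hdiam g hg1 with hgS | ⟨a, ha, b, hb, rfl⟩
        · exact Finset.mem_insert.2 (Or.inr (Finset.mem_union.2 (Or.inl hgS)))
        · refine Finset.mem_insert.2 (Or.inr (Finset.mem_union.2 (Or.inr ?_)))
          refine Finset.mem_image.2 ⟨(a, b), ?_, rfl⟩
          exact Finset.mem_filter.2 ⟨Finset.mem_product.2 ⟨ha, hb⟩, hg1⟩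
    have hbound : Fintype.card G ≤ 1 + ((r + z) + (Q.image f).card) := by
      calc Fintype.card G = (Finset.univ : Finset G).card := (Finset.card_univ).symm
        _ ≤ (insert 1 (S ∪ Q.image f)).card := Finset.card_le_card hcover
        _ ≤ 1 + (S ∪ Q.image f).card := by
            simpa [add_comm] using Finset.card_insert_le 1 (S ∪ Q.image f)
        _ ≤ 1 + (S.card + (Q.image f).card) := by
            exact add_le_add_right (Finset.card_union_le _ _) 1
        _ = 1 + ((r + z) + (Q.image f).card) := by rw [hk]
    have hsq : (z + r) ^ 2 = (r + z) * (r + z) := by ring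
    rw [hcard, hsq] at hbound
    omega
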